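/- Let M be a symmetric positive definite n×n real matrix, let α > 0, and let Θ_w and Θ_v be n×n diagonal matrices with strictly positive diagonal entries. Then the matrix (1/α) M − (1/α²) (Θ_w⁻¹ + Θ_v⁻¹ + (1/α) M⁻¹)⁻¹ is symmetric positive definite. -/

import Mathlib

open Matrix

lemma posdef_smul {n : ℕ} {A : Matrix (Fin n) (Fin n) ℝ} (hA : A.PosDef)
    {c : ℝ} (hc : 0 < c) : (c • A).PosDef := by
  refine Matrix.PosDef.of_dotProduct_mulVec_pos ?_ fun ⦃x⦄ hx => ?_
  · show (c • A)ᴴ = c • A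
    rw [conjTranspose_smul, hA.1.eq, star_trivial]
  · rw [smul_mulVec, dotProduct_smul, smul_eq_mul]
    exact mul_pos hc (hA.dotProduct_mulVec_pos hx)

lemma posdef_conj {n : ℕ} {T B : Matrix (Fin n) (Fin n) ℝ} (hT : T.PosDef)
    (hB : IsUnit B) : (Bᴴ * T * B).PosDef := by
  refine Matrix.PosDef.of_dotProduct_mulVec_pos (isHermitian_conjTranspose_mul_mul B hT.1) fun ⦃x⦄ hx => ?_
  have hBx : B *ᵥ x ≠ 0 := by
    intro h
    exact hx (by simpa using (mulVec_injective_iff_isUnit.mpr hB) (h.trans (mulVec_zero B).symm))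
  simpa only [star_mulVec, dotProduct_mulVec, vecMul_vecMul] using hT.dotProduct_mulVec_pos hBx

lemma schur_aux {n : ℕ} (M D : Matrix (Fin n) (Fin n) ℝ) (hM : M.PosDef) (hD : D.PosDef)
    (α : ℝ) (hα : 0 < α) :
    (α⁻¹ • M - (α ^ 2)⁻¹ • (D + α⁻¹ • M⁻¹)⁻¹).PosDef := by
  have hα0 : α ≠ 0 := hα.ne'
  have hs1 : α⁻¹ * α ^ 2 = α := by field_simp
  have hs2 : (α ^ 2)⁻¹ * α = α⁻¹ := by field_simp
  set T : Matrix (Fin n) (Fin n) ℝ := α⁻¹ • M + (α ^ 2)⁻¹ • D⁻¹ with hTdef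
  have hT : T.PosDef := (posdef_smul hM (inv_pos.mpr hα)).add
    (posdef_smul hD.inv (by positivity))
  have hMM : M * M⁻¹ = 1 := Matrix.mul_nonsing_inv M hM.det_pos.ne'.isUnit
  have hDD : D⁻¹ * D = 1 := Matrix.nonsing_inv_mul D hD.det_pos.ne'.isUnit
  have hTT : T⁻¹ * T = 1 := Matrix.nonsing_inv_mul T hT.det_pos.ne'.isUnit
  have hTkey : T * ((α ^ 2) • D) = α • (M * D) + 1 := by
    rw [hTdef, add_mul, Matrix.smul_mul, Matrix.smul_mul, Matrix.mul_smul, Matrix.mul_smul,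
      hDD, smul_smul, smul_smul, inv_mul_cancel₀ (pow_ne_zero 2 hα0), one_smul, hs1]
  have hTinvkey : T⁻¹ * (α • (M * D) + 1) = (α ^ 2) • D := by
    rw [← hTkey, ← mul_assoc, hTT, one_mul]
  have h3 : α • (M * (T⁻¹ * (M * D))) + M * T⁻¹ = (α ^ 2) • (M * D) := by
    have := congrArg (fun X => M * X) hTinvkey
    simpa [mul_add, Matrix.mul_smul, mul_assoc] using this
  have hb : M * (T⁻¹ * (M * D)) = α • (M * D) - α⁻¹ • (M * T⁻¹) := by
    have h4 := congrArg (fun X => α⁻¹ • X) h3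
    simp only [smul_add, smul_smul] at h4
    rw [inv_mul_cancel₀ hα0, one_smul, hs1] at h4
    exact eq_sub_iff_add_eq.mpr h4
  have hXS : (α • M - M * T⁻¹ * M) * (D + α⁻¹ • M⁻¹) = 1 := by
    rw [sub_mul, mul_add, mul_add, Matrix.smul_mul, Matrix.mul_smul, Matrix.mul_smul,
      Matrix.smul_mul, hMM, smul_smul, inv_mul_cancel₀ hα0, one_smul,
      mul_assoc (M * T⁻¹) M M⁻¹, hMM, mul_one, mul_assoc (M * T⁻¹) M D, mul_assoc M T⁻¹ (M * D), hb]
    abel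
  have hSinv : (D + α⁻¹ • M⁻¹)⁻¹ = α • M - M * T⁻¹ * M := Matrix.inv_eq_left_inv hXS
  have hgoal : α⁻¹ • M - (α ^ 2)⁻¹ • (D + α⁻¹ • M⁻¹)⁻¹ = (α ^ 2)⁻¹ • (Mᴴ * T⁻¹ * M) := by
    rw [hSinv, hM.1.eq, smul_sub, smul_smul, hs2, sub_sub_cancel]
  rw [hgoal]
  exact posdef_smul (posdef_conj hT.inv hM.isUnit) (by positivity)

/-- The matrix `(1/α) M - (1/α²) (Θ_w⁻¹ + Θ_v⁻¹ + (1/α) M⁻¹)⁻¹` is symmetric positive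
definite whenever `M` is symmetric positive definite, `α > 0`, and `Θ_w`, `Θ_v` are diagonal
with strictly positive diagonal entries. -/
theorem control_schur_term_posdef {n : ℕ}
    (M : Matrix (Fin n) (Fin n) ℝ) (hM : M.PosDef)
    (α : ℝ) (hα : 0 < α)
    (dw dv : Fin n → ℝ) (hdw : ∀ i, 0 < dw i) (hdv : ∀ i, 0 < dv i) :
    (α⁻¹ • M - (α ^ 2)⁻¹ •
      ((Matrix.diagonal dw)⁻¹ + (Matrix.diagonal dv)⁻¹ + α⁻¹ • M⁻¹)⁻¹).PosDef :=
  schur_aux M _ hM ((Matrix.PosDef.diagonal hdw).inv.add (Matrix.PosDef.diagonal hdv).inv) α hα
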